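/- Let w ≥ 2 be an even integer and f : ℚ → ℂ an odd function (f(-x) = -f(x)) satisfying f(x) = f(x+1) for all x ∈ ℚ and f(x) = x^w · f(-1/x) for all nonzero x ∈ ℚ. Then f is identically zero. -/

import Mathlib

lemma den_sub_int (x : ℚ) (n : ℤ) : (x - (n : ℚ)).den = x.den := by
  have hred : x.num.natAbs.Coprime x.den := x.reduced
  have hcop : IsCoprime (x.num - n * (x.den : ℤ)) (x.den : ℤ) := by
    have h : IsCoprime x.num (x.den : ℤ) := by
      rw [Int.isCoprime_iff_gcd_eq_one]
      exact hred
    exact (h.add_mul_right_left (-n)).of_isCoprime_of_dvd_left (by ring_nf; exact dvd_refl _)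
  have hcop' : (x.num - n * (x.den : ℤ)).natAbs.Coprime x.den := by
    rw [Int.isCoprime_iff_gcd_eq_one] at hcop
    exact hcop
  have hd : (x.den : ℤ) ≠ 0 := Int.natCast_ne_zero.mpr x.den_nz
  have : x - (n : ℚ) = (⟨x.num - n * (x.den : ℤ), x.den, x.den_nz, hcop'⟩ : ℚ) := by
    rw [Rat.mk_eq_divInt, Rat.divInt_eq_div]
    push_cast
    rw [sub_div, mul_div_assoc, div_self (by exact_mod_cast x.den_nz), mul_one,
      Rat.num_div_den]
  rw [this]

lemma inv_den_of_pos {x : ℚ} (hx : 0 < x) : (x⁻¹).den = x.num.natAbs := by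
  have hnum : 0 < x.num := Rat.num_pos.mpr hx
  have hnz : x.num.natAbs ≠ 0 := by positivity
  have hcop : ((x.den : ℤ)).natAbs.Coprime x.num.natAbs := by
    simpa [Nat.coprime_comm] using x.reduced
  have : x⁻¹ = (⟨(x.den : ℤ), x.num.natAbs, hnz, by simpa using hcop⟩ : ℚ) := by
    rw [Rat.mk_eq_divInt, Rat.inv_def]
    congr 1
    omega
  rw [this]

theorem stmt_1 (w : ℕ) (hw : 2 ≤ w) (hweven : Even w) (f : ℚ → ℂ)
    (hodd : ∀ x : ℚ, f (-x) = -f x)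
    (hper : ∀ x : ℚ, f x = f (x + 1))
    (hmod : ∀ x : ℚ, x ≠ 0 → f x = (x : ℂ) ^ w * f (-1 / x)) :
    ∀ x : ℚ, f x = 0 := by
  have hzero : f 0 = 0 := by
    have h := hodd 0
    rw [neg_zero] at h
    have h2 : (2:ℂ) * f 0 = 0 := by linear_combination h
    simpa using h2
  -- periodicity by any integer
  have hshift : ∀ (n : ℤ) (x : ℚ), f (x + n) = f x := by
    intro n
    induction n using Int.induction_on with
    | zero => simp
    | succ k ih =>
      intro x
      have : (x : ℚ) + (k + 1 : ℤ) = (x + 1) + (k : ℤ) := by push_cast; ring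
      rw [this, ih (x + 1), ← hper x]
    | pred k ih =>
      intro x
      have : (x : ℚ) + (-k - 1 : ℤ) = (x - 1) + (-k : ℤ) := by push_cast; ring
      rw [this, ih (x - 1), hper (x - 1), sub_add_cancel]
  -- strong induction on denominator
  suffices H : ∀ n : ℕ, ∀ x : ℚ, x.den = n → f x = 0 by
    intro x; exact H x.den x rfl
  intro n
  induction n using Nat.strong_induction_on with
  | _ n ih =>
    intro x hx
    rcases Nat.lt_or_ge n 2 with hn | hn
    · -- denominator 0 or 1 : x is an integer
      interval_cases n
      · exact absurd hx x.den_nz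
      · have hxint : x = (x.num : ℚ) := by
          conv_lhs => rw [← Rat.num_div_den x, hx]
          simp
        rw [hxint]
        have := hshift x.num 0
        rw [zero_add] at this
        rw [this, hzero]
    · -- denominator ≥ 2
      set y : ℚ := Int.fract x with hy
      have hfx : f x = f y := by
        have := hshift ⌊x⌋ y
        rw [hy, Int.fract, sub_add_cancel] at this
        rw [hy]; exact this
      have hyden : y.den = n := by
        rw [hy, Int.fract, den_sub_int, hx]
      have hy0 : 0 < y := by
        rcases lt_or_eq_of_le (Int.fract_nonneg x) with h | h
        · exact h
        · exfalso
          have : y.den = 1 := by rw [hy, ← h]; rfl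
          omega
      have hy1 : y < 1 := Int.fract_lt_one x
      have hynum : 0 < y.num := Rat.num_pos.mpr hy0
      have hltden : y.num < (y.den : ℤ) := Rat.num_lt_denom_iff.mpr hy1
      have hden' : (-1 / y).den = y.num.natAbs := by
        have : -1 / y = -(y⁻¹) := by ring
        rw [this, Rat.neg_den, inv_den_of_pos hy0]
      have hlt : y.num.natAbs < n := by
        rw [← hyden]; omega
      have hf : f (-1 / y) = 0 := ih _ hlt _ hden'
      rw [hfx, hmod y (ne_of_gt hy0), hf, mul_zero]
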